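/- Let a, a' : ℕ≥1 → (0,∞) agree on l ≤ n, with convergent G = Σ_{m≥1} Π_{l=1}^m a(l) and G' = Σ_{m≥1} Π_{l=1}^m a'(l). Define steady-state probabilities π(m) = (Π_{l=1}^m a(l))/(1+G) (with π(0) = 1/(1+G)) and π'(m) analogously. Then there exists σ with |σ| ≤ max(δ(n), δ'(n)) (where δ, δ' are the tail sums beyond n) such that π'(m) = (1+σ) π(m) for all m = 0,1,…,n. -/

import Mathlib

open scoped BigOperators

/-- Near-proportionality of the stationary distributions of two birth–death
queues whose rate ratios agree on states `1,…,n`: there is `σ` with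
`|σ| ≤ max (δ n) (δ' n)` such that `π'(m) = (1+σ) π(m)` for all `m ≤ n`,
where `π(m) = (∏_{l=1}^m a l)/(1+G)`. -/
theorem stmt_11 (a a' : ℕ → ℝ) (n : ℕ)
    (ha : ∀ l, 1 ≤ l → 0 < a l) (ha' : ∀ l, 1 ≤ l → 0 < a' l)
    (hagree : ∀ l, 1 ≤ l → l ≤ n → a l = a' l)
    (hG : Summable (fun m : ℕ => ∏ l ∈ Finset.Icc 1 (m + 1), a l))
    (hG' : Summable (fun m : ℕ => ∏ l ∈ Finset.Icc 1 (m + 1), a' l)) :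
    ∃ σ : ℝ,
      |σ| ≤ max (∑' m : ℕ, ∏ l ∈ Finset.Icc 1 (m + n + 1), a l)
              (∑' m : ℕ, ∏ l ∈ Finset.Icc 1 (m + n + 1), a' l) ∧
      ∀ m ≤ n,
        (∏ l ∈ Finset.Icc 1 m, a' l) /
            (1 + ∑' m' : ℕ, ∏ l ∈ Finset.Icc 1 (m' + 1), a' l) =
          (1 + σ) * ((∏ l ∈ Finset.Icc 1 m, a l) /
            (1 + ∑' m' : ℕ, ∏ l ∈ Finset.Icc 1 (m' + 1), a l)) := by
  set G := ∑' m : ℕ, ∏ l ∈ Finset.Icc 1 (m + 1), a l with hGdef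
  set G' := ∑' m : ℕ, ∏ l ∈ Finset.Icc 1 (m + 1), a' l with hG'def
  have hpp : ∀ m, 0 < ∏ l ∈ Finset.Icc 1 m, a l := fun m =>
    Finset.prod_pos (fun l hl => ha l (Finset.mem_Icc.mp hl).1)
  have hpp' : ∀ m, 0 < ∏ l ∈ Finset.Icc 1 m, a' l := fun m =>
    Finset.prod_pos (fun l hl => ha' l (Finset.mem_Icc.mp hl).1)
  have hGnn : 0 ≤ G := tsum_nonneg fun m => (hpp _).le
  have hG'nn : 0 ≤ G' := tsum_nonneg fun m => (hpp' _).le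
  have h1G : (0:ℝ) < 1 + G := by linarith
  have h1G' : (0:ℝ) < 1 + G' := by linarith
  set δ := ∑' m : ℕ, ∏ l ∈ Finset.Icc 1 (m + n + 1), a l with hδdef
  set δ' := ∑' m : ℕ, ∏ l ∈ Finset.Icc 1 (m + n + 1), a' l with hδ'def
  have hδnn : 0 ≤ δ := tsum_nonneg fun m => (hpp _).le
  have hδ'nn : 0 ≤ δ' := tsum_nonneg fun m => (hpp' _).le
  have hsplit : (∑ m ∈ Finset.range n, ∏ l ∈ Finset.Icc 1 (m + 1), a l) + δ = G :=
    hG.sum_add_tsum_nat_add n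
  have hsplit' : (∑ m ∈ Finset.range n, ∏ l ∈ Finset.Icc 1 (m + 1), a' l) + δ' = G' :=
    hG'.sum_add_tsum_nat_add n
  have hsum_eq : (∑ m ∈ Finset.range n, ∏ l ∈ Finset.Icc 1 (m + 1), a l)
      = ∑ m ∈ Finset.range n, ∏ l ∈ Finset.Icc 1 (m + 1), a' l := by
    refine Finset.sum_congr rfl fun m hm => ?_
    refine Finset.prod_congr rfl fun l hl => ?_
    obtain ⟨h1, h2⟩ := Finset.mem_Icc.mp hl
    exact hagree l h1 (h2.trans (Finset.mem_range.mp hm))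
  have hdiff : G - G' = δ - δ' := by
    rw [← hsplit, ← hsplit', hsum_eq]; ring
  refine ⟨(1 + G) / (1 + G') - 1, ?_, ?_⟩
  · have hσ : (1 + G) / (1 + G') - 1 = (δ - δ') / (1 + G') := by
      rw [← hdiff]; field_simp; ring
    rw [hσ, abs_div, abs_of_pos h1G']
    have h1 : |δ - δ'| ≤ max δ δ' := by
      rcases le_total δ δ' with h | h
      · rw [abs_of_nonpos (by linarith), neg_sub]
        exact le_trans (by linarith) (le_max_right _ _)
      · rw [abs_of_nonneg (by linarith)]
        exact le_trans (by linarith) (le_max_left _ _)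
    calc |δ - δ'| / (1 + G') ≤ |δ - δ'| / 1 :=
          div_le_div_of_nonneg_left (abs_nonneg _) one_pos (by linarith)
      _ = |δ - δ'| := by rw [div_one]
      _ ≤ max δ δ' := h1
  · intro m hm
    have hprod : (∏ l ∈ Finset.Icc 1 m, a' l) = ∏ l ∈ Finset.Icc 1 m, a l := by
      refine Finset.prod_congr rfl fun l hl => ?_
      obtain ⟨h1, h2⟩ := Finset.mem_Icc.mp hl
      exact (hagree l h1 (h2.trans hm)).symm
    rw [hprod]
    field_simp
    ring
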